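/- Every path graph P_n (and more generally every forest G) admits a 2-partition f of its vertex set with b_f(γ_G(v)) ≤ 1 for every vertex v; i.e., taking G₁ = G₂ = G, the simultaneous locally-balanced constant can be improved from 2 to 1 when the two forests coincide. -/

import Mathlib

open scoped Classical

noncomputable def bal {α : Type*} (f : α → Fin 2) (S : Finset α) : ℕ :=
  (((S.filter fun x => f x = 1).card : ℤ) - ((S.filter fun x => f x = 0).card : ℤ)).natAbs

lemma bal_le_card {α : Type*} (f : α → Fin 2) (S : Finset α) : bal f S ≤ S.card := by
  classical
  have hz : ∀ z : Fin 2, ¬z = 1 ↔ z = 0 := by decide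
  have h0 : (S.filter fun x => ¬f x = 1) = S.filter fun x => f x = 0 :=
    Finset.filter_congr (fun x _ => hz (f x))
  have h : (S.filter fun x => f x = 1).card + (S.filter fun x => f x = 0).card = S.card := by
    rw [← h0]
    exact Finset.card_filter_add_card_filter_not (p := fun x => f x = 1)
  unfold bal
  omega

lemma bal_congr {α : Type*} {f g : α → Fin 2} {S : Finset α} (h : ∀ a ∈ S, f a = g a) :
    bal f S = bal g S := by
  classical
  unfold bal
  rw [Finset.filter_congr (p := fun x => f x = 1) (q := fun x => g x = 1)
      (fun a ha => by simp [h a ha]),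
    Finset.filter_congr (p := fun x => f x = 0) (q := fun x => g x = 0)
      (fun a ha => by simp [h a ha])]

lemma exists_leaf {V : Type*} [Fintype V] {G : SimpleGraph V} (h : G.IsAcyclic)
    {a b : V} (hab : G.Adj a b) :
    ∃ x u : V, G.Adj x u ∧ ∀ c, G.Adj x c → c = u := by
  classical
  set P : ℕ → Prop := fun n => ∃ (u w : V) (p : G.Walk u w), p.IsPath ∧ p.length = n with hPdef
  have hP1 : P 1 := by
    refine ⟨a, b, SimpleGraph.Walk.cons hab SimpleGraph.Walk.nil, ?_, by simp⟩
    simp [SimpleGraph.Walk.cons_isPath_iff, hab.ne]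
  have hcard1 : 1 ≤ Fintype.card V := by
    have : Nonempty V := ⟨a⟩
    exact Fintype.card_pos
  set N := Nat.findGreatest P (Fintype.card V) with hNdef
  have h1N : 1 ≤ N := Nat.le_findGreatest hcard1 hP1
  have hPN : P N := Nat.findGreatest_of_ne_zero rfl (by omega)
  obtain ⟨u, w, p, hp, hlen⟩ := hPN
  have hlt : p.length - 1 < p.length := by omega
  have hgv : p.getVert (p.length - 1 + 1) = w := by
    rw [show p.length - 1 + 1 = p.length by omega, p.getVert_length]
  have hadj : G.Adj w (p.getVert (p.length - 1)) := by
    have := p.adj_getVert_succ hlt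
    rw [hgv] at this
    exact this.symm
  refine ⟨w, p.getVert (p.length - 1), hadj, ?_⟩
  intro c hwc
  have hcsup : c ∈ p.support := by
    by_contra hc
    have hq : (SimpleGraph.Walk.cons hwc.symm p.reverse).IsPath := by
      rw [SimpleGraph.Walk.cons_isPath_iff]
      exact ⟨hp.reverse, by simpa [SimpleGraph.Walk.support_reverse] using hc⟩
    have hqlen : (SimpleGraph.Walk.cons hwc.symm p.reverse).length = N + 1 := by
      simp [SimpleGraph.Walk.length_cons, SimpleGraph.Walk.length_reverse, hlen]
    have hle : N + 1 ≤ Fintype.card V := by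
      have := hq.length_lt
      omega
    exact Nat.findGreatest_is_greatest (show N < N + 1 by omega) hle
      ⟨c, u, _, hq, hqlen⟩
  have hdu : (p.dropUntil c hcsup).length = 1 := by
    have h1 : (p.dropUntil c hcsup).IsPath := hp.dropUntil hcsup
    have h2 : (SimpleGraph.Walk.cons hwc.symm SimpleGraph.Walk.nil : G.Walk c w).IsPath := by
      simp [SimpleGraph.Walk.cons_isPath_iff, hwc.ne']
    have heq := h.path_unique ⟨_, h1⟩ ⟨_, h2⟩
    have := congrArg (fun q : G.Path c w => q.1.length) heq
    simpa using this
  have htu : (p.takeUntil c hcsup).length = p.length - 1 := by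
    have := congrArg SimpleGraph.Walk.length (p.take_spec hcsup)
    rw [SimpleGraph.Walk.length_append, hdu] at this
    omega
  have hkey : p.getVert (p.length - 1) = c := by
    calc p.getVert (p.length - 1)
        = ((p.takeUntil c hcsup).append (p.dropUntil c hcsup)).getVert (p.length - 1) := by
          rw [p.take_spec hcsup]
      _ = c := by
          rw [SimpleGraph.Walk.getVert_append, htu]
          simp
  exact hkey.symm

lemma forest_aux : ∀ (n : ℕ) {V : Type*} [Fintype V] (G : SimpleGraph V), G.IsAcyclic →
    G.edgeFinset.card = n → ∃ f : V → Fin 2, ∀ v : V, bal f (G.neighborFinset v) ≤ 1 := by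
  intro n
  induction n using Nat.strong_induction_on with
  | _ n ih =>
    intro V _ G hG hcard
    by_cases hE : G.edgeFinset = ∅
    · refine ⟨fun _ => 0, fun v => ?_⟩
      have hnv : G.neighborFinset v = ∅ := by
        ext c
        simp only [SimpleGraph.mem_neighborFinset, Finset.notMem_empty, iff_false]
        intro hvc
        exact Finset.eq_empty_iff_forall_notMem.mp hE s(v, c)
          (SimpleGraph.mem_edgeFinset.mpr hvc)
      simp [bal, hnv]
    · obtain ⟨e, he⟩ := Finset.nonempty_iff_ne_empty.mpr hE
      induction e using Sym2.ind with
      | _ a b =>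
        have hab : G.Adj a b := SimpleGraph.mem_edgeFinset.mp he
        obtain ⟨x, u, hxu, huniq⟩ := exists_leaf hG hab
        set G' := G.deleteEdges {s(x, u)} with hG'def
        have hG'le : G' ≤ G := SimpleGraph.deleteEdges_le _
        have hG'ac : G'.IsAcyclic := fun v c hc =>
          hG (c.mapLe hG'le) (hc.mapLe hG'le)
        have hG'edge : G'.edgeFinset = G.edgeFinset.erase s(x, u) := by
          have hES : G'.edgeSet = G.edgeSet \ {s(x, u)} := SimpleGraph.edgeSet_deleteEdges _
          ext e
          rw [Finset.mem_erase, SimpleGraph.mem_edgeFinset, SimpleGraph.mem_edgeFinset, hES]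
          simp [and_comm]
        have hmem : s(x, u) ∈ G.edgeFinset := SimpleGraph.mem_edgeFinset.mpr hxu
        have hcard' : G'.edgeFinset.card < n := by
          rw [hG'edge, Finset.card_erase_of_mem hmem, hcard]
          have : 0 < n := by
            rw [← hcard]
            exact Finset.card_pos.mpr ⟨_, hmem⟩
          omega
        obtain ⟨f, hf⟩ := ih _ (by convert hcard') G' hG'ac rfl
        -- key neighborhood facts
        have hNx : G.neighborFinset x = {u} := by
          ext c
          simp only [SimpleGraph.mem_neighborFinset, Finset.mem_singleton]
          exact ⟨fun hc => huniq c hc, fun hc => hc ▸ hxu⟩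
        have hxNother : ∀ v : V, v ≠ u → x ∉ G.neighborFinset v := by
          intro v hvu hmem'
          rw [SimpleGraph.mem_neighborFinset] at hmem'
          exact hvu (huniq v hmem'.symm)
        have hNother : ∀ v : V, v ≠ x → v ≠ u → G'.neighborFinset v = G.neighborFinset v := by
          intro v hvx hvu
          ext c
          rw [SimpleGraph.mem_neighborFinset, SimpleGraph.mem_neighborFinset, hG'def,
            SimpleGraph.deleteEdges_adj]
          constructor
          · exact fun hc => hc.1
          · intro hc
            refine ⟨hc, fun hmem' => ?_⟩
            rw [Set.mem_singleton_iff, Sym2.eq_iff] at hmem'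
            rcases hmem' with ⟨h1, _⟩ | ⟨h1, _⟩
            · exact hvx h1
            · exact hvu h1
        have hNu : G'.neighborFinset u = (G.neighborFinset u).erase x := by
          ext c
          constructor
          · intro hc
            rw [SimpleGraph.mem_neighborFinset, hG'def, SimpleGraph.deleteEdges_adj] at hc
            rw [Finset.mem_erase, SimpleGraph.mem_neighborFinset]
            refine ⟨fun hcx => hc.2 ?_, hc.1⟩
            subst hcx
            rw [Set.mem_singleton_iff]
            exact Sym2.eq_swap
          · intro hc
            rw [Finset.mem_erase, SimpleGraph.mem_neighborFinset] at hc
            rw [SimpleGraph.mem_neighborFinset, hG'def, SimpleGraph.deleteEdges_adj]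
            refine ⟨hc.2, fun hmem' => ?_⟩
            rw [Set.mem_singleton_iff, Sym2.eq_iff] at hmem'
            rcases hmem' with ⟨h1, _⟩ | ⟨_, h2⟩
            · exact hxu.ne' h1
            · exact hc.1 h2
        set S := (G.neighborFinset u).erase x with hSdef
        have hxS : x ∉ S := Finset.notMem_erase _ _
        have hxNu : x ∈ G.neighborFinset u := by
          rw [SimpleGraph.mem_neighborFinset]; exact hxu.symm
        have hNuins : G.neighborFinset u = insert x S := (Finset.insert_erase hxNu).symm
        set A := (S.filter fun y => f y = 1).card with hAdef
        set B := (S.filter fun y => f y = 0).card with hBdef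
        set cx : Fin 2 := if A ≤ B then 1 else 0 with hcxdef
        refine ⟨fun v => if v = x then cx else f v, fun v => ?_⟩
        set f'' : V → Fin 2 := fun v => if v = x then cx else f v with hf''def
        have hf''x : f'' x = cx := by simp [hf''def]
        have hf''ne : ∀ y, y ≠ x → f'' y = f y := fun y hy => by simp [hf''def, hy]
        by_cases hvx : v = x
        · subst hvx
          rw [hNx]
          calc bal f'' {u} ≤ ({u} : Finset V).card := bal_le_card _ _
            _ = 1 := Finset.card_singleton u
        · by_cases hvu : v = u
          · subst hvu
            have hIH : bal f (G'.neighborFinset v) ≤ 1 := by convert hf v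
            rw [hNu] at hIH
            rw [hNuins]
            have hfiltS : ∀ i : Fin 2, (S.filter fun y => f'' y = i) = S.filter fun y => f y = i :=
              fun i => Finset.filter_congr (fun y hy => by
                rw [hf''ne y (fun h' => hxS (h' ▸ hy))])
            have hfilt : ∀ i : Fin 2, ((insert x S).filter fun y => f'' y = i).card
                = (if cx = i then 1 else 0) + (S.filter fun y => f y = i).card := by
              intro i
              rw [Finset.filter_insert]
              by_cases hcx : cx = i
              · rw [if_pos (by rw [hf''x, hcx]), hfiltS,
                  Finset.card_insert_of_notMem (fun hmem' => hxS (Finset.mem_filter.mp hmem').1),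
                  if_pos hcx]
                omega
              · rw [if_neg (by rw [hf''x]; exact hcx), hfiltS, if_neg hcx]
                omega
            unfold bal
            rw [hfilt 1, hfilt 0]
            unfold bal at hIH
            rw [← hAdef, ← hBdef] at hIH ⊢
            by_cases hAB : A ≤ B
            · rw [if_pos (by rw [hcxdef, if_pos hAB]), if_neg (by rw [hcxdef, if_pos hAB]; decide)]
              omega
            · rw [if_neg (by rw [hcxdef, if_neg hAB]; decide), if_pos (by rw [hcxdef, if_neg hAB])]
              omega
          · have hxNv : x ∉ G.neighborFinset v := hxNother v hvu
            have hbal : bal f'' (G.neighborFinset v) = bal f (G.neighborFinset v) :=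
              bal_congr (fun y hy => hf''ne y (fun h' => hxNv (h' ▸ hy)))
            rw [hbal, ← hNother v hvx hvu]
            convert hf v

/-- Every finite forest (in particular every path) admits a 1-locally-balanced
2-partition of its vertex set. -/
theorem forest_one_locally_balanced {V : Type*} [Fintype V]
    (G : SimpleGraph V) (h : G.IsAcyclic) :
    ∃ f : V → Fin 2, ∀ v : V, bal f (G.neighborFinset v) ≤ 1 := by
  exact forest_aux G.edgeFinset.card G h rfl
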